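/- (Confluent reduction preserves the stability function.) Let (A, b) be an s-stage DIRK scheme (A lower triangular, c = A e) with c₁ = … = c_r for some 2 ≤ r ≤ s, and let (A*, b*) be the reduced scheme defined by a*₁₁ = a₁₁; a*_{i1} = Σ_{j=1}^{r} a_{r+i−1, j} and a*_{ij} = a_{r+i−1, r+j−1} for i ≥ 2, j ≥ 2; b*₁ = Σ_{j=1}^{r} b_j and b*_i = b_{r+i−1} for i ≥ 2. Then for every z ∈ ℝ such that both I − zA and I − zA* are invertible, the stability functions coincide: 1 + z b^T (I − zA)^{-1} e = 1 + z (b*)^T (I − zA*)^{-1} e*, where e and e* are the all-ones vectors of the appropriate lengths. -/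

import Mathlib

open Matrix

/-- Confluent reduction preserves the stability function: if the first `r` abscissas of
an `s`-stage DIRK scheme coincide and `(A', b')` is the reduced `(s−r+1)`-stage scheme,
then for every `z` with `I − zA` and `I − zA'` invertible,
`1 + z bᵀ (I − zA)⁻¹ e = 1 + z b'ᵀ (I − zA')⁻¹ e'`. -/
theorem stmt10 {s r : ℕ} (hr : 2 ≤ r) (hrs : r ≤ s)
    (A : Matrix (Fin s) (Fin s) ℝ) (b : Fin s → ℝ)
    (hlow : ∀ i j : Fin s, i < j → A i j = 0)
    (c : Fin s → ℝ) (hc : c = A.mulVec fun _ => 1)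
    (hconf : ∀ j : Fin s, (j : ℕ) < r → c j = c ⟨0, by omega⟩)
    (emb : Fin (s - r + 1) → Fin s)
    (hemb : ∀ i : Fin (s - r + 1),
      emb i = if (i : ℕ) = 0 then ⟨0, by omega⟩
        else ⟨r - 1 + (i : ℕ), by have := i.isLt; omega⟩)
    (A' : Matrix (Fin (s - r + 1)) (Fin (s - r + 1)) ℝ) (b' : Fin (s - r + 1) → ℝ)
    (hA'00 : A' ⟨0, by omega⟩ ⟨0, by omega⟩ = A ⟨0, by omega⟩ ⟨0, by omega⟩)
    (hA'0j : ∀ j : Fin (s - r + 1), (j : ℕ) ≠ 0 → A' ⟨0, by omega⟩ j = 0)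
    (hA'i0 : ∀ i : Fin (s - r + 1), (i : ℕ) ≠ 0 →
      A' i ⟨0, by omega⟩ =
        ∑ j ∈ Finset.univ.filter (fun j : Fin s => (j : ℕ) < r), A (emb i) j)
    (hA'ij : ∀ i j : Fin (s - r + 1), (i : ℕ) ≠ 0 → (j : ℕ) ≠ 0 →
      A' i j = A (emb i) (emb j))
    (hb'0 : b' ⟨0, by omega⟩ = ∑ j ∈ Finset.univ.filter (fun j : Fin s => (j : ℕ) < r), b j)
    (hb'i : ∀ i : Fin (s - r + 1), (i : ℕ) ≠ 0 → b' i = b (emb i)) :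
    ∀ z : ℝ, (1 - z • A).det ≠ 0 → (1 - z • A').det ≠ 0 →
      1 + z * (b ⬝ᵥ (1 - z • A)⁻¹.mulVec fun _ => 1) =
        1 + z * (b' ⬝ᵥ (1 - z • A')⁻¹.mulVec fun _ => 1) := by
  intro z hdet hdet'
  have hs : 0 < s := by omega
  have hs' : 0 < s - r + 1 := by omega
  set z0 : Fin s := ⟨0, hs⟩ with hz0
  set w0 : Fin (s - r + 1) := ⟨0, hs'⟩ with hw0
  set M : Matrix (Fin s) (Fin s) ℝ := 1 - z • A with hM
  set u : Fin s → ℝ := M⁻¹.mulVec (fun _ => 1) with hu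
  have hMu : M.mulVec u = fun _ => 1 := by
    rw [hu, Matrix.mulVec_mulVec, Matrix.mul_nonsing_inv _ (isUnit_iff_ne_zero.mpr hdet),
      Matrix.one_mulVec]
  have hrow : ∀ i, u i = 1 + z * ∑ k, A i k * u k := by
    intro i
    have h1 := congrFun hMu i
    have h2 : M.mulVec u i = u i - z * ∑ k, A i k * u k := by
      simp [hM, Matrix.mulVec, dotProduct, Matrix.sub_apply, Matrix.one_apply,
        sub_mul, Finset.sum_sub_distrib, Finset.mul_sum, mul_assoc, ite_mul]
    rw [h2] at h1
    linarith
  have hdiag : ∀ i : Fin s, 1 - z * A i i ≠ 0 := by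
    have hblock : M.BlockTriangular OrderDual.toDual := by
      intro i j hij
      have hij' : i < j := hij
      simp [hM, Matrix.sub_apply, Matrix.one_apply, hlow i j hij', Fin.ne_of_lt hij']
    have hdetM := Matrix.det_of_lowerTriangular M hblock
    rw [hdetM] at hdet
    intro i hi
    apply hdet
    apply Finset.prod_eq_zero (Finset.mem_univ i)
    simpa [hM, Matrix.sub_apply, Matrix.one_apply] using hi
  have hcA : ∀ j : Fin s, c j = ∑ k, A j k := by
    intro j; rw [hc]; simp [Matrix.mulVec, dotProduct]
  have hc00 : c z0 = A z0 z0 := by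
    rw [hcA]
    apply Finset.sum_eq_single
    · intro k _ hk
      have hk0 : (k : ℕ) ≠ 0 := fun h => hk (Fin.ext (by simp [h, hz0]))
      exact hlow z0 k (by rw [Fin.lt_def]; simp [hz0]; omega)
    · intro h; exact absurd (Finset.mem_univ z0) h
  have hu0 : u z0 = 1 + z * (c z0 * u z0) := by
    have h1 := hrow z0
    have h2 : ∑ k, A z0 k * u k = A z0 z0 * u z0 := by
      apply Finset.sum_eq_single
      · intro k _ hk
        have hk0 : (k : ℕ) ≠ 0 := fun h => hk (Fin.ext (by simp [h, hz0]))
        rw [hlow z0 k (by rw [Fin.lt_def]; simp [hz0]; omega), zero_mul]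
      · intro h; exact absurd (Finset.mem_univ z0) h
    rw [h2] at h1
    rw [hc00]
    exact h1
  -- Step 1: all confluent stages have equal u-value
  have hurn : ∀ n, ∀ j : Fin s, (j : ℕ) = n → n < r → u j = u z0 := by
    intro n
    induction n using Nat.strong_induction_on with
    | _ n ih =>
      intro j hjn hnr
      rcases Nat.eq_zero_or_pos n with h0 | hpos
      · have : j = z0 := Fin.ext (by simp [hjn, h0, hz0])
        rw [this]
      · have hsum : ∑ k, A j k * u k = (c j - A j j) * u z0 + A j j * u j := by
          have hterm : ∀ k : Fin s, A j k * u k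
              = A j k * u z0 + (if k = j then A j j * (u j - u z0) else 0) := by
            intro k
            rcases lt_trichotomy k j with hk | hk | hk
            · have hkv : (k : ℕ) < n := by rw [← hjn]; exact hk
              rw [ih k hkv k rfl (by omega), if_neg (Fin.ne_of_lt hk)]
              ring
            · subst hk
              simp
              ring
            · rw [hlow j k hk, if_neg (Fin.ne_of_gt hk)]
              ring
          rw [Finset.sum_congr rfl (fun k _ => hterm k), Finset.sum_add_distrib,
            Finset.sum_ite_eq' Finset.univ j, if_pos (Finset.mem_univ j),
            ← Finset.sum_mul, ← hcA j]
          ring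
        have hE1 : u j = 1 + z * ((c j - A j j) * u z0 + A j j * u j) := by
          have h := hrow j
          rw [hsum] at h
          exact h
        have hcj : c j = c z0 := hconf j (by omega)
        rw [hcj] at hE1
        have h3 : (1 - z * A j j) * (u j - u z0) = 0 := by
          linear_combination hE1 - hu0
        rcases mul_eq_zero.mp h3 with h | h
        · exact absurd h (hdiag j)
        · linarith [sub_eq_zero.mp h]
  have hur : ∀ j : Fin s, (j : ℕ) < r → u j = u z0 := fun j hj => hurn _ j rfl hj
  -- reindexing lemma
  have hli : ∀ k : Fin s, r ≤ (k : ℕ) →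
      emb ⟨(k : ℕ) + 1 - r, by have := k.isLt; omega⟩ = k := by
    intro k hk
    rw [hemb]
    rw [if_neg (by simp; omega)]
    exact Fin.ext (by simp; omega)
  have hre : ∀ g : Fin s → ℝ,
      ∑ k ∈ Finset.univ.filter (fun k : Fin s => ¬ (k : ℕ) < r), g k
        = ∑ j ∈ Finset.univ.filter (fun j : Fin (s - r + 1) => (j : ℕ) ≠ 0), g (emb j) := by
    intro g
    refine Finset.sum_nbij'
      (i := fun k : Fin s => (⟨(k : ℕ) + 1 - r, by have := k.isLt; omega⟩ : Fin (s - r + 1)))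
      (j := fun j => emb j) ?_ ?_ ?_ ?_ ?_
    · intro a ha
      simp at ha ⊢
      omega
    · intro a ha
      simp at ha ⊢
      rw [hemb, if_neg (by intro h; exact ha (by simp [Fin.ext_iff, h]))]
      have ha' : (a : ℕ) ≠ 0 := fun h => ha (Fin.ext (by simp [h]))
      simp
      omega
    · intro a ha
      simp at ha
      exact hli a (by omega)
    · intro a ha
      simp at ha
      have h := hemb a
      rw [if_neg (by intro h; exact ha (by simp [Fin.ext_iff, h]))] at h
      apply Fin.ext
      simp [h]
      omega
    · intro a ha
      simp at ha
      rw [hli a (by omega)]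
  -- emb at 0
  have hemb0 : emb w0 = z0 := by rw [hemb]; simp [hw0, hz0]
  -- v solves reduced system
  set v : Fin (s - r + 1) → ℝ := fun i => u (emb i) with hv
  have hsplitw : ∀ f : Fin (s - r + 1) → ℝ,
      ∑ j, f j = f w0 + ∑ j ∈ Finset.univ.filter (fun j : Fin (s - r + 1) => (j : ℕ) ≠ 0), f j := by
    intro f
    rw [← Finset.sum_filter_add_sum_filter_not Finset.univ (fun j : Fin (s - r + 1) => (j : ℕ) ≠ 0) f]
    have hset : Finset.univ.filter (fun j : Fin (s - r + 1) => ¬ (j : ℕ) ≠ 0) = {w0} := by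
      ext j
      simp only [Finset.mem_filter, Finset.mem_univ, true_and, Finset.mem_singleton, not_not,
        Fin.ext_iff, hw0, Fin.val_mk]
    rw [hset, Finset.sum_singleton]
    ring
  have hcollapse : ∀ g : Fin s → ℝ,
      ∑ k ∈ Finset.univ.filter (fun k : Fin s => (k : ℕ) < r), g k * u k
        = (∑ k ∈ Finset.univ.filter (fun k : Fin s => (k : ℕ) < r), g k) * u z0 := by
    intro g
    rw [Finset.sum_mul]
    apply Finset.sum_congr rfl
    intro k hk
    simp at hk
    rw [hur k hk]
  have hrow' : ∀ i : Fin (s - r + 1), v i = 1 + z * ∑ j, A' i j * v j := by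
    intro i
    rcases Nat.eq_zero_or_pos (i : ℕ) with h0 | hpos
    · have hiw : i = w0 := Fin.ext (by simp [h0, hw0])
      subst hiw
      have h2 : ∑ j, A' w0 j * v j = A' w0 w0 * v w0 := by
        apply Finset.sum_eq_single
        · intro k _ hk
          have hk0 : (k : ℕ) ≠ 0 := fun h => hk (Fin.ext (by simp [h, hw0]))
          rw [hA'0j k hk0, zero_mul]
        · intro h; exact absurd (Finset.mem_univ w0) h
      rw [h2]
      have : v w0 = u z0 := by rw [hv]; simp [hemb0]
      rw [this]
      have hA : A' w0 w0 = A z0 z0 := hA'00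
      rw [hA]
      have hu0' := hu0
      rw [hc00] at hu0'
      exact hu0'
    · have hi0 : (i : ℕ) ≠ 0 := by omega
      have h1 := hrow (emb i)
      rw [← Finset.sum_filter_add_sum_filter_not Finset.univ (fun k : Fin s => (k : ℕ) < r)
        (fun k => A (emb i) k * u k)] at h1
      rw [hcollapse (fun k => A (emb i) k), hre (fun k => A (emb i) k * u k)] at h1
      have h2 : ∑ j ∈ Finset.univ.filter (fun j : Fin (s - r + 1) => (j : ℕ) ≠ 0),
          A (emb i) (emb j) * u (emb j)
          = ∑ j ∈ Finset.univ.filter (fun j : Fin (s - r + 1) => (j : ℕ) ≠ 0), A' i j * v j := by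
        apply Finset.sum_congr rfl
        intro j hj
        simp at hj
        rw [hA'ij i j hi0 (fun h => hj (Fin.ext (by simp [h]))), hv]
      rw [h2] at h1
      rw [hsplitw (fun j => A' i j * v j)]
      have hvw : v w0 = u z0 := by rw [hv]; simp [hemb0]
      have h3 : A' i w0 * v w0
          = (∑ k ∈ Finset.univ.filter (fun k : Fin s => (k : ℕ) < r), A (emb i) k) * u z0 := by
        rw [hA'i0 i hi0, hvw]
      show v i = 1 + z * (A' i w0 * v w0
        + ∑ j ∈ Finset.univ.filter (fun j : Fin (s - r + 1) => (j : ℕ) ≠ 0), A' i j * v j)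
      rw [h3]
      exact h1
  have hM'v : (1 - z • A').mulVec v = fun _ => 1 := by
    funext i
    have h2 : (1 - z • A').mulVec v i = v i - z * ∑ j, A' i j * v j := by
      simp [Matrix.mulVec, dotProduct, Matrix.sub_apply, Matrix.one_apply,
        sub_mul, Finset.sum_sub_distrib, Finset.mul_sum, mul_assoc, ite_mul]
    rw [h2, hrow' i]
    ring
  have hveq : (1 - z • A')⁻¹.mulVec (fun _ => 1) = v := by
    rw [← hM'v, Matrix.mulVec_mulVec,
      Matrix.nonsing_inv_mul _ (isUnit_iff_ne_zero.mpr hdet'), Matrix.one_mulVec]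
  -- final dot products
  have hdot : b ⬝ᵥ u = b' ⬝ᵥ v := by
    rw [dotProduct, dotProduct]
    rw [← Finset.sum_filter_add_sum_filter_not Finset.univ (fun k : Fin s => (k : ℕ) < r)
      (fun k => b k * u k)]
    rw [hcollapse b, hre (fun k => b k * u k)]
    rw [hsplitw (fun j => b' j * v j)]
    have hvw : v w0 = u z0 := by rw [hv]; simp [hemb0]
    show _ = b' w0 * v w0
      + ∑ j ∈ Finset.univ.filter (fun j : Fin (s - r + 1) => (j : ℕ) ≠ 0), b' j * v j
    have h2 : ∑ j ∈ Finset.univ.filter (fun j : Fin (s - r + 1) => (j : ℕ) ≠ 0),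
        b (emb j) * u (emb j)
        = ∑ j ∈ Finset.univ.filter (fun j : Fin (s - r + 1) => (j : ℕ) ≠ 0), b' j * v j := by
      apply Finset.sum_congr rfl
      intro j hj
      simp at hj
      rw [hb'i j (fun h => hj (Fin.ext (by simp [h]))), hv]
    rw [h2, hb'0, hvw]
  rw [hveq, hdot]
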